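/- Let K ⊆ ℝⁿ be a proper cone. The set of K-irreducible matrices is open in π(K): if A ∈ π(K) satisfies (I + A)^{n-1}(K \ {0}) ⊆ int K, then there exists ε > 0 such that every B ∈ π(K) with ‖B - A‖ < ε also satisfies (I + B)^{n-1}(K \ {0}) ⊆ int K. -/

import Mathlib

open Matrix Set
noncomputable section

variable {n : ℕ}

/-- A proper cone: convex, a cone, pointed, closed, with nonempty interior. -/
def IsProperCone (K : Set (Fin n → ℝ)) : Prop :=
  Convex ℝ K ∧ (∀ (r : ℝ), 0 < r → ∀ x ∈ K, r • x ∈ K) ∧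
    K ∩ (-K) = {0} ∧ IsClosed K ∧ (interior K).Nonempty

/-- A compact base of the cone `K`. -/
def IsCompactBase (K B : Set (Fin n → ℝ)) : Prop :=
  IsCompact B ∧ (0 : Fin n → ℝ) ∉ closure B ∧
    K = {y | ∃ r : ℝ, 0 ≤ r ∧ ∃ x ∈ B, y = r • x}

/-- A face of the cone `K`: a subcone such that `x ∈ F`, `0 ≤_K y ≤_K x` implies `y ∈ F`. -/
def IsFace (K F : Set (Fin n → ℝ)) : Prop :=
  F ⊆ K ∧ (∀ (r : ℝ), 0 < r → ∀ x ∈ F, r • x ∈ F) ∧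
    (∀ x ∈ F, ∀ y ∈ K, x - y ∈ K → y ∈ F)

/-- `A ∈ π(K)`, i.e. `A K ⊆ K`. -/
def MapsCone (A : Matrix (Fin n) (Fin n) ℝ) (K : Set (Fin n → ℝ)) : Prop :=
  ∀ x ∈ K, A.mulVec x ∈ K

/-- `A` is `K`-irreducible: `A ∈ π(K)` and `A` leaves no nontrivial face of `K` invariant. -/
def KIrreducible (K : Set (Fin n → ℝ)) (A : Matrix (Fin n) (Fin n) ℝ) : Prop :=
  MapsCone A K ∧ ∀ F : Set (Fin n → ℝ), IsFace K F → F ≠ {0} → F ≠ K →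
    ¬ (A.mulVec '' F ⊆ F)

/-- Spectral radius: the maximum modulus of complex eigenvalues of a real matrix. -/
def specRad (A : Matrix (Fin n) (Fin n) ℝ) : ℝ :=
  sSup ((fun z : ℂ => ‖z‖) '' spectrum ℂ (A.map (algebraMap ℝ ℂ)))

/-- Operator norm of a matrix induced by the reference norm on `Fin n → ℝ`. -/
def opNorm (A : Matrix (Fin n) (Fin n) ℝ) : ℝ :=
  ‖LinearMap.toContinuousLinearMap A.mulVecLin‖

/-- The set of products of `t` elements of `M` (the time-`t` evolution operators). -/
def ProdSet (M : Set (Matrix (Fin n) (Fin n) ℝ)) : ℕ → Set (Matrix (Fin n) (Fin n) ℝ)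
  | 0 => {1}
  | (t + 1) => {P | ∃ A ∈ M, ∃ Q ∈ ProdSet M t, P = A * Q}

/-- The joint spectral radius of the discrete-time semigroup generated by `M`. -/
def jsr (M : Set (Matrix (Fin n) (Fin n) ℝ)) : ℝ :=
  ⨅ t : {t : ℕ // 0 < t}, (sSup (opNorm '' ProdSet M t.1)) ^ ((t.1 : ℝ)⁻¹)

/-- `N` is a norm on `Fin n → ℝ`. -/
def IsNorm (N : (Fin n → ℝ) → ℝ) : Prop :=
  (∀ x, N x = 0 → x = 0) ∧ (∀ (c : ℝ) (x), N (c • x) = |c| * N x) ∧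
    (∀ x y, N (x + y) ≤ N x + N y)

/-- The operator norm on matrices induced by a vector norm `v`. -/
def vop (v : (Fin n → ℝ) → ℝ) (A : Matrix (Fin n) (Fin n) ℝ) : ℝ :=
  sSup ((fun x => v (A.mulVec x)) '' {x | v x ≤ 1})

/-- The joint spectral radius computed via the matrix norm `vop v`. -/
def jsrWith (v : (Fin n → ℝ) → ℝ) (M : Set (Matrix (Fin n) (Fin n) ℝ)) : ℝ :=
  ⨅ t : {t : ℕ // 0 < t}, (sSup (vop v '' ProdSet M t.1)) ^ ((t.1 : ℝ)⁻¹)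

/-- Hausdorff distance between sets of matrices w.r.t. the matrix norm `ν`. -/
def hausdorffWith (ν : Matrix (Fin n) (Fin n) ℝ → ℝ)
    (M N : Set (Matrix (Fin n) (Fin n) ℝ)) : ℝ :=
  max (sSup ((fun B => sInf ((fun A => ν (A - B)) '' M)) '' N))
      (sSup ((fun A => sInf ((fun B => ν (A - B)) '' N)) '' M))

/-- Eccentricity of a norm `v` relative to the reference norm. -/
def ecc (v : (Fin n → ℝ) → ℝ) : ℝ :=
  sSup (v '' {x : Fin n → ℝ | ‖x‖ = 1}) / sInf (v '' {x : Fin n → ℝ | ‖x‖ = 1})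

/-- `K`-absolute value w.r.t. the simplicial cone generated by the basis `b`. -/
def absK (b : Module.Basis (Fin n) ℝ (Fin n → ℝ)) (x : Fin n → ℝ) : Fin n → ℝ :=
  ∑ i, |b.repr x i| • b i


open Pointwise in
private lemma smul_interior_subset {n : ℕ} {K : Set (Fin n → ℝ)} {r : ℝ} (hr : 0 < r)
    (hcone : ∀ (s : ℝ), 0 < s → ∀ x ∈ K, s • x ∈ K) {y : Fin n → ℝ}
    (hy : y ∈ interior K) : r • y ∈ interior K := by
  have hsmulK : r • K ⊆ K := by
    rintro _ ⟨z, hz, rfl⟩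
    exact hcone r hr z hz
  have : r • interior K ⊆ interior K := by
    rw [← interior_smul₀ (ne_of_gt hr)]
    exact interior_mono hsmulK
  exact this (smul_mem_smul_set hy)

/-- Auxiliary: matrices as continuous linear maps. -/
private def Fc {n : ℕ} (X : Matrix (Fin n) (Fin n) ℝ) : (Fin n → ℝ) →L[ℝ] (Fin n → ℝ) :=
  LinearMap.toContinuousLinearMap X.mulVecLin

private lemma Fc_apply {n : ℕ} (X : Matrix (Fin n) (Fin n) ℝ) (x : Fin n → ℝ) :
    Fc X x = X.mulVec x := rfl

private lemma Fc_mul {n : ℕ} (X Y : Matrix (Fin n) (Fin n) ℝ) :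
    Fc (X * Y) = Fc X * Fc Y := by
  ext x
  simp [Fc_apply, ContinuousLinearMap.mul_apply, Matrix.mulVec_mulVec]

private lemma Fc_one {n : ℕ} : Fc (1 : Matrix (Fin n) (Fin n) ℝ) = 1 := by
  ext x
  simp [Fc_apply]

private lemma Fc_add {n : ℕ} (X Y : Matrix (Fin n) (Fin n) ℝ) :
    Fc (X + Y) = Fc X + Fc Y := by
  ext x
  simp [Fc_apply, Matrix.add_mulVec]

private lemma Fc_sub {n : ℕ} (X Y : Matrix (Fin n) (Fin n) ℝ) :
    Fc (X - Y) = Fc X - Fc Y := by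
  ext x
  simp [Fc_apply, Matrix.sub_mulVec]

private lemma Fc_pow {n : ℕ} (X : Matrix (Fin n) (Fin n) ℝ) (m : ℕ) :
    Fc (X ^ m) = (Fc X) ^ m := by
  induction m with
  | zero => simpa using Fc_one
  | succ k ih => rw [pow_succ, Fc_mul, ih, pow_succ]

private lemma opNorm_eq_Fc {n : ℕ} (X : Matrix (Fin n) (Fin n) ℝ) :
    opNorm X = ‖Fc X‖ := rfl

/-- `K`-irreducibility (characterised by `(I+A)^(n-1)(K\{0}) ⊆ int K`)
is an open property in `π(K)`. -/
theorem stmt3 (K : Set (Fin n → ℝ)) (hK : IsProperCone K)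
    (A : Matrix (Fin n) (Fin n) ℝ) (hA : MapsCone A K)
    (h : ∀ x ∈ K, x ≠ 0 → ((1 + A) ^ (n - 1)).mulVec x ∈ interior K) :
    ∃ ε : ℝ, 0 < ε ∧ ∀ B : Matrix (Fin n) (Fin n) ℝ, MapsCone B K →
      opNorm (B - A) < ε →
      ∀ x ∈ K, x ≠ 0 → ((1 + B) ^ (n - 1)).mulVec x ∈ interior K := by
  classical
  set m := n - 1 with hm
  have hKclosed : IsClosed K := hK.2.2.2.1
  set S : Set (Fin n → ℝ) := K ∩ Metric.sphere 0 1 with hS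
  have hScomp : IsCompact S := (isCompact_sphere 0 1).inter_left hKclosed
  have hgc : Continuous fun x : Fin n → ℝ => ((1 + A) ^ m).mulVec x :=
    ((1 + A) ^ m).mulVecLin.continuous_of_finiteDimensional
  have himg : IsCompact ((fun x => ((1 + A) ^ m).mulVec x) '' S) := hScomp.image hgc
  have hsub : (fun x => ((1 + A) ^ m).mulVec x) '' S ⊆ interior K := by
    rintro _ ⟨x, ⟨hxK, hxs⟩, rfl⟩
    have hx1 : ‖x‖ = 1 := by simpa using mem_sphere_zero_iff_norm.mp hxs
    have hx0 : x ≠ 0 := by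
      intro hx; rw [hx] at hx1; simp at hx1
    exact h x hxK hx0
  obtain ⟨δ, hδ, hth⟩ := himg.exists_thickening_subset_open isOpen_interior hsub
  have hc : Continuous fun T : (Fin n → ℝ) →L[ℝ] (Fin n → ℝ) => (1 + T) ^ m :=
    (continuous_const.add continuous_id).pow m
  obtain ⟨ε, hε, hεimp⟩ := Metric.continuousAt_iff.mp (hc.continuousAt (x := Fc A)) δ hδ
  refine ⟨ε, hε, ?_⟩
  intro B _hB hBA x hxK hx0
  -- key claim for unit vectors
  have key : ∀ u ∈ S, ((1 + B) ^ m).mulVec u ∈ interior K := by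
    intro u hu
    have hu1 : ‖u‖ = 1 := mem_sphere_zero_iff_norm.mp hu.2
    have hdistAB : dist (Fc B) (Fc A) < ε := by
      rw [dist_eq_norm, ← Fc_sub]
      exact lt_of_le_of_lt (le_of_eq (opNorm_eq_Fc (B - A)).symm) hBA
    have hpow : ‖(1 + Fc B) ^ m - (1 + Fc A) ^ m‖ < δ := by
      have := hεimp hdistAB
      rwa [dist_eq_norm] at this
    have hnrm : dist (((1 + B) ^ m).mulVec u) (((1 + A) ^ m).mulVec u) < δ := by
      rw [dist_eq_norm]
      have heq : ((1 + B) ^ m).mulVec u - ((1 + A) ^ m).mulVec u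
          = (Fc ((1 + B) ^ m - (1 + A) ^ m)) u := by
        rw [Fc_apply, Matrix.sub_mulVec]
      rw [heq]
      calc ‖(Fc ((1 + B) ^ m - (1 + A) ^ m)) u‖
          ≤ ‖Fc ((1 + B) ^ m - (1 + A) ^ m)‖ * ‖u‖ :=
            (Fc ((1 + B) ^ m - (1 + A) ^ m)).le_opNorm u
        _ = ‖(1 + Fc B) ^ m - (1 + Fc A) ^ m‖ := by
            rw [hu1, mul_one, Fc_sub, Fc_pow, Fc_pow, Fc_add, Fc_add, Fc_one]
        _ < δ := hpow
    apply hth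
    exact Metric.mem_thickening_iff.mpr
      ⟨((1 + A) ^ m).mulVec u, ⟨u, hu, rfl⟩, hnrm⟩
  -- reduce general x to the unit vector case
  have hnx : ‖x‖ ≠ 0 := norm_ne_zero_iff.mpr hx0
  have hnxpos : (0 : ℝ) < ‖x‖ := norm_pos_iff.mpr hx0
  set u : Fin n → ℝ := ‖x‖⁻¹ • x with hu_def
  have huK : u ∈ K := hK.2.1 _ (inv_pos.mpr hnxpos) x hxK
  have hunorm : ‖u‖ = 1 := by
    rw [hu_def, norm_smul, norm_inv, norm_norm, inv_mul_cancel₀ hnx]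
  have huS : u ∈ S := ⟨huK, mem_sphere_zero_iff_norm.mpr hunorm⟩
  have hx_eq : x = ‖x‖ • u := by
    rw [hu_def, smul_inv_smul₀ hnx]
  have hmem : ((1 + B) ^ m).mulVec u ∈ interior K := key u huS
  have heq2 : ((1 + B) ^ m).mulVec x = ‖x‖ • ((1 + B) ^ m).mulVec u := by
    conv_lhs => rw [hx_eq]
    rw [Matrix.mulVec_smul]
  rw [heq2]
  exact smul_interior_subset hnxpos hK.2.1 hmem
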